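/- arXiv:2101.08688 — 6 statements merged into one kernel-verified Lean document; each statement's English description precedes it below -/
import Mathlib

section
/- The HMC operator is a contraction in weighted L^q norm: for q ≥ 1 and nonnegative h with ‖h‖_q < ∞, one has ‖T h‖_q ≤ ‖h‖_q, where ‖h‖_q^q = ∫_Q |h/f|^q f. -/
open MeasureTheory ENNReal

private lemma ofReal_integral_le' {α : Type*} [MeasurableSpace α] {μ : Measure α}
    (f : α → ℝ) (hf : 0 ≤ᵐ[μ] f) :
    ENNReal.ofReal (∫ x, f x ∂μ) ≤ ∫⁻ x, ENNReal.ofReal (f x) ∂μ := by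
  by_cases hfi : Integrable f μ
  · rw [ofReal_integral_eq_lintegral_ofReal hfi hf]
  · rw [integral_undef hfi]; simp

private lemma jensen_step {α : Type*} [MeasurableSpace α] {ν : Measure α} {u w : α → ℝ≥0∞}
    (hu : AEMeasurable u ν) (hw : AEMeasurable w ν) (hw1 : ∫⁻ y, w y ∂ν = 1)
    {q : ℝ} (hq : 1 ≤ q) :
    (∫⁻ y, u y * w y ∂ν) ^ q ≤ ∫⁻ y, u y ^ q * w y ∂ν := by
  rcases eq_or_lt_of_le hq with h1 | h1
  · simp [← h1]
  · have hq0 : (0:ℝ) < q := lt_trans zero_lt_one h1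
    have hr := Real.HolderConjugate.conjExponent h1
    set r := Real.conjExponent q with hrdef
    have hr0 : (0:ℝ) < r := hr.symm.pos
    have key : ∫⁻ y, u y * w y ∂ν ≤ (∫⁻ y, u y ^ q * w y ∂ν) ^ (1/q) := by
      have h2 : ∀ y, u y * w y = (u y * w y ^ (1/q)) * w y ^ (1/r) := by
        intro y
        rw [mul_assoc, ← ENNReal.rpow_add_of_nonneg _ _ (by positivity) (by positivity),
          one_div, one_div, hr.inv_add_inv_eq_one, ENNReal.rpow_one]
      calc ∫⁻ y, u y * w y ∂ν
          = ∫⁻ y, ((fun y => u y * w y ^ (1/q)) * fun y => w y ^ (1/r)) y ∂ν := by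
            simp only [Pi.mul_apply]; exact lintegral_congr fun y => h2 y
        _ ≤ (∫⁻ y, (u y * w y ^ (1/q)) ^ q ∂ν) ^ (1/q)
              * (∫⁻ y, (w y ^ (1/r)) ^ r ∂ν) ^ (1/r) :=
            ENNReal.lintegral_mul_le_Lp_mul_Lq ν hr
              (hu.mul (hw.pow aemeasurable_const)) (hw.pow aemeasurable_const)
        _ = (∫⁻ y, u y ^ q * w y ∂ν) ^ (1/q) := by
            have e1 : ∀ y, (u y * w y ^ (1/q)) ^ q = u y ^ q * w y := by
              intro y
              rw [ENNReal.mul_rpow_of_nonneg _ _ hq0.le, ← ENNReal.rpow_mul, one_div,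
                inv_mul_cancel₀ hq0.ne', ENNReal.rpow_one]
            have e2 : ∀ y, (w y ^ (1/r)) ^ r = w y := by
              intro y
              rw [← ENNReal.rpow_mul, one_div, inv_mul_cancel₀ hr0.ne', ENNReal.rpow_one]
            simp only [e1, e2, hw1, ENNReal.one_rpow, mul_one]
    calc (∫⁻ y, u y * w y ∂ν) ^ q ≤ ((∫⁻ y, u y ^ q * w y ∂ν) ^ (1/q)) ^ q :=
          ENNReal.rpow_le_rpow key hq0.le
      _ = ∫⁻ y, u y ^ q * w y ∂ν := by
          rw [← ENNReal.rpow_mul, one_div, inv_mul_cancel₀ hq0.ne', ENNReal.rpow_one]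

private lemma lintegral_comp_mp {α : Type*} [MeasurableSpace α] {μ : Measure α} {H : α → α}
    (hH : MeasurePreserving H μ μ) {K : α → ℝ≥0∞} (hK : AEMeasurable K μ) :
    ∫⁻ z, K (H z) ∂μ = ∫⁻ z, K z ∂μ := by
  have h1 : (fun z => K (H z)) =ᵐ[μ] fun z => hK.mk K (H z) :=
    hH.quasiMeasurePreserving.ae_eq_comp hK.ae_eq_mk
  rw [lintegral_congr_ae h1]
  rw [show (∫⁻ z, hK.mk K (H z) ∂μ) = ∫⁻ z, hK.mk K z ∂μ from hH.lintegral_comp hK.measurable_mk]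
  exact lintegral_congr_ae hK.ae_eq_mk.symm

/-- The HMC operator is a contraction in the weighted `L^q` norm: `‖T h‖_q ≤ ‖h‖_q`. -/
theorem hmc_operator_contraction
    {Q P : Type*} [MeasurableSpace Q] [MeasurableSpace P]
    (μ : Measure Q) (ν : Measure P) [SigmaFinite μ] [SigmaFinite ν]
    (f : Q → ℝ) (hf_pos : ∀ x, 0 < f x) (hf_int : Integrable f μ)
    (g : P → ℝ) (hg_pos : ∀ y, 0 < g y) (hg_prob : ∫ y, g y ∂ν = 1)
    (H : Q × P → Q × P) (hH_bij : Function.Bijective H)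
    (hH_meas : MeasurePreserving H (μ.prod ν) (μ.prod ν))
    (hH_inv : ∀ z : Q × P, f (H z).1 * g (H z).2 = f z.1 * g z.2)
    (q : ℝ) (hq : 1 ≤ q)
    (h : Q → ℝ) (h_meas : Measurable h) (h_nonneg : ∀ x, 0 ≤ h x)
    (h_mem : Integrable (fun x => |h x / f x| ^ q * f x) μ)
    (h_int' : Integrable (fun z : Q × P => h (H z).1 * g (H z).2) (μ.prod ν)) :
    (∫ x, |(∫ y, h (H (x, y)).1 * g (H (x, y)).2 ∂ν) / f x| ^ q * f x ∂μ) ^ (1 / q)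
      ≤ (∫ x, |h x / f x| ^ q * f x ∂μ) ^ (1 / q) := by
  have hq0 : (0:ℝ) < q := lt_of_lt_of_le zero_lt_one hq
  -- basic measurability / integrability facts
  have hgi : Integrable g ν := by
    by_contra hgi
    rw [integral_undef hgi] at hg_prob
    exact zero_ne_one hg_prob
  set w : P → ℝ≥0∞ := fun y => ENNReal.ofReal (g y) with hwdef
  have hw : AEMeasurable w ν := ENNReal.measurable_ofReal.comp_aemeasurable hgi.aemeasurable
  have hw1 : ∫⁻ y, w y ∂ν = 1 := by
    rw [← ofReal_integral_eq_lintegral_ofReal hgi (Filter.Eventually.of_forall fun y => (hg_pos y).le),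
      hg_prob, ENNReal.ofReal_one]
  set φ : Q × P → ℝ := fun z => h (H z).1 / f (H z).1 with hφdef
  have hφ0 : ∀ z, 0 ≤ φ z := fun z => div_nonneg (h_nonneg _) (hf_pos _).le
  have hfae : AEMeasurable (fun z : Q × P => f z.1) (μ.prod ν) :=
    hf_int.aestronglyMeasurable.comp_fst.aemeasurable
  have hφm : AEMeasurable φ (μ.prod ν) := by
    have h1 : AEMeasurable (fun z : Q × P => h (H z).1) (μ.prod ν) :=
      (h_meas.comp (measurable_fst.comp hH_meas.measurable)).aemeasurable
    have h2 : AEMeasurable (fun z : Q × P => f (H z).1) (μ.prod ν) :=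
      hfae.comp_quasiMeasurePreserving hH_meas.quasiMeasurePreserving
    exact h1.div h2
  set Φ : Q × P → ℝ≥0∞ := fun z => ENNReal.ofReal (φ z) with hΦdef
  have hΦ : AEMeasurable Φ (μ.prod ν) := ENNReal.measurable_ofReal.comp_aemeasurable hφm
  set J : Q → ℝ := fun x => ∫ y, φ (x, y) * g y ∂ν with hJdef
  have hJ0 : ∀ x, 0 ≤ J x := fun x =>
    integral_nonneg fun y => mul_nonneg (hφ0 _) (hg_pos y).le
  -- rewrite the LHS integrand
  have hLHS : ∀ x, (∫ y, h (H (x, y)).1 * g (H (x, y)).2 ∂ν) / f x = J x := by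
    intro x
    have e : ∀ y : P, h (H (x, y)).1 * g (H (x, y)).2 = f x * (φ (x, y) * g y) := by
      intro y
      have hfz : f (H (x, y)).1 ≠ 0 := (hf_pos _).ne'
      have := hH_inv (x, y)
      calc h (H (x, y)).1 * g (H (x, y)).2
          = (h (H (x, y)).1 / f (H (x, y)).1) * (f (H (x, y)).1 * g (H (x, y)).2) := by
            rw [div_mul_eq_mul_div, mul_comm (f (H (x, y)).1), ← mul_assoc,
              mul_div_assoc, div_self hfz, mul_one]
        _ = φ (x, y) * (f x * g y) := by rw [this]
        _ = f x * (φ (x, y) * g y) := by ring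
    rw [show (∫ y, h (H (x, y)).1 * g (H (x, y)).2 ∂ν) = ∫ y, f x * (φ (x, y) * g y) ∂ν from
      integral_congr_ae (Filter.Eventually.of_forall e), integral_const_mul,
      mul_div_cancel_left₀ _ (hf_pos x).ne']
  simp only [hLHS]
  -- reduce to inequality of integrals
  have hA0 : 0 ≤ ∫ x, |J x| ^ q * f x ∂μ :=
    integral_nonneg fun x => mul_nonneg (by positivity) (hf_pos x).le
  refine Real.rpow_le_rpow hA0 ?_ (by positivity)
  -- measurability of J and the integrand
  have hsec : AEStronglyMeasurable (fun z : Q × P => φ z * g z.2) (μ.prod ν) :=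
    (hφm.mul hgi.aestronglyMeasurable.comp_snd.aemeasurable).aestronglyMeasurable
  have hJm : AEStronglyMeasurable J μ := hsec.integral_prod_right'
  have hAm : AEStronglyMeasurable (fun x => |J x| ^ q * f x) μ := by
    refine AEMeasurable.aestronglyMeasurable ?_
    exact (((continuous_abs.measurable.comp_aemeasurable hJm.aemeasurable).pow
      aemeasurable_const).mul hf_int.aemeasurable)
  set L_A : ℝ≥0∞ := ∫⁻ x, ENNReal.ofReal (|J x| ^ q * f x) ∂μ with hLAdef
  set L_B : ℝ≥0∞ := ∫⁻ x, ENNReal.ofReal (|h x / f x| ^ q * f x) ∂μ with hLBdef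
  have hB0 : 0 ≤ ∫ x, |h x / f x| ^ q * f x ∂μ :=
    integral_nonneg fun x => mul_nonneg (by positivity) (hf_pos x).le
  have hAeq : ∫ x, |J x| ^ q * f x ∂μ = L_A.toReal :=
    integral_eq_lintegral_of_nonneg_ae
      (Filter.Eventually.of_forall fun x => mul_nonneg (by positivity) (hf_pos x).le) hAm
  have hBeq : ENNReal.ofReal (∫ x, |h x / f x| ^ q * f x ∂μ) = L_B :=
    ofReal_integral_eq_lintegral_ofReal h_mem
      (Filter.Eventually.of_forall fun x => mul_nonneg (by positivity) (hf_pos x).le)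
  -- auxiliary functions on the product space
  set G : Q × P → ℝ≥0∞ := fun z => Φ z ^ q * w z.2 * ENNReal.ofReal (f z.1) with hGdef
  set K : Q × P → ℝ≥0∞ := fun z =>
    ENNReal.ofReal (h z.1 / f z.1) ^ q * (ENNReal.ofReal (g z.2) * ENNReal.ofReal (f z.1))
    with hKdef
  have hwprod : AEMeasurable (fun z : Q × P => ENNReal.ofReal (g z.2)) (μ.prod ν) :=
    ENNReal.measurable_ofReal.comp_aemeasurable hgi.aestronglyMeasurable.comp_snd.aemeasurable
  have hfprod : AEMeasurable (fun z : Q × P => ENNReal.ofReal (f z.1)) (μ.prod ν) :=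
    ENNReal.measurable_ofReal.comp_aemeasurable hfae
  have hG : AEMeasurable G (μ.prod ν) :=
    ((hΦ.pow aemeasurable_const).mul hwprod).mul hfprod
  have hK : AEMeasurable K (μ.prod ν) :=
    ((ENNReal.measurable_ofReal.comp_aemeasurable
      ((h_meas.comp measurable_fst).aemeasurable.div hfae)).pow aemeasurable_const).mul
      (hwprod.mul hfprod)
  -- Step 1: pointwise Jensen bound
  have step1 : L_A ≤ ∫⁻ x, (∫⁻ y, Φ (x, y) ^ q * w y ∂ν) * ENNReal.ofReal (f x) ∂μ := by
    refine lintegral_mono_ae ?_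
    filter_upwards [MeasureTheory.Measure.ae_ae_of_ae_prod hΦ.ae_eq_mk] with x hx
    have hx' : (fun y => Φ (x, y)) =ᵐ[ν] fun y => hΦ.mk Φ (x, y) := hx
    have hux : AEMeasurable (fun y => Φ (x, y)) ν :=
      ((hΦ.measurable_mk.comp measurable_prodMk_left).aemeasurable).congr hx'.symm
    calc ENNReal.ofReal (|J x| ^ q * f x)
        = ENNReal.ofReal (|J x|) ^ q * ENNReal.ofReal (f x) := by
          rw [ENNReal.ofReal_mul (by positivity),
            ENNReal.ofReal_rpow_of_nonneg (abs_nonneg _) hq0.le]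
      _ ≤ (∫⁻ y, Φ (x, y) ^ q * w y ∂ν) * ENNReal.ofReal (f x) := by
          refine mul_le_mul_left ?_ _
          have h1 : ENNReal.ofReal (|J x|) ≤ ∫⁻ y, Φ (x, y) * w y ∂ν := by
            rw [abs_of_nonneg (hJ0 x)]
            refine le_trans (ofReal_integral_le' _
              (Filter.Eventually.of_forall fun y => mul_nonneg (hφ0 _) (hg_pos y).le)) ?_
            refine le_of_eq (lintegral_congr fun y => ?_)
            rw [ENNReal.ofReal_mul (hφ0 _)]
          calc ENNReal.ofReal (|J x|) ^ q ≤ (∫⁻ y, Φ (x, y) * w y ∂ν) ^ q :=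
                ENNReal.rpow_le_rpow h1 hq0.le
            _ ≤ ∫⁻ y, Φ (x, y) ^ q * w y ∂ν := jensen_step hux hw hw1 hq
  -- Step 2: push the constant inside and use Tonelli
  have step2 : (∫⁻ x, (∫⁻ y, Φ (x, y) ^ q * w y ∂ν) * ENNReal.ofReal (f x) ∂μ)
      = ∫⁻ z, G z ∂(μ.prod ν) := by
    rw [lintegral_prod G hG]
    refine lintegral_congr fun x => ?_
    rw [← lintegral_mul_const' (ENNReal.ofReal (f x)) _ ENNReal.ofReal_ne_top]
  -- Step 3: G = K ∘ H
  have step3 : (∫⁻ z, G z ∂(μ.prod ν)) = ∫⁻ z, K (H z) ∂(μ.prod ν) := by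
    refine lintegral_congr fun z => ?_
    have e : ENNReal.ofReal (g (H z).2) * ENNReal.ofReal (f (H z).1)
        = ENNReal.ofReal (g z.2) * ENNReal.ofReal (f z.1) := by
      rw [← ENNReal.ofReal_mul (hg_pos _).le, ← ENNReal.ofReal_mul (hg_pos _).le,
        mul_comm (g (H z).2), hH_inv z, mul_comm]
    show Φ z ^ q * w z.2 * ENNReal.ofReal (f z.1) = K (H z)
    simp only [hKdef, e, hwdef]
    rw [mul_assoc]
  -- Step 4: change of variables
  have step4 : (∫⁻ z, K (H z) ∂(μ.prod ν)) = ∫⁻ z, K z ∂(μ.prod ν) :=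
    lintegral_comp_mp hH_meas hK
  -- Step 5: compute ∫⁻ K
  have step5 : (∫⁻ z, K z ∂(μ.prod ν)) = L_B := by
    rw [lintegral_prod K hK]
    refine lintegral_congr fun x => ?_
    have e : ∀ y : P, K (x, y)
        = (ENNReal.ofReal (h x / f x) ^ q * ENNReal.ofReal (f x)) * w y := by
      intro y; simp only [hKdef, hwdef]; ring
    rw [lintegral_congr e, lintegral_const_mul'' _ hw, hw1, mul_one,
      ENNReal.ofReal_mul (by positivity : (0:ℝ) ≤ |h x / f x| ^ q),
      abs_of_nonneg (div_nonneg (h_nonneg x) (hf_pos x).le),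
      ENNReal.ofReal_rpow_of_nonneg (div_nonneg (h_nonneg x) (hf_pos x).le) hq0.le]
  have main : L_A ≤ L_B :=
    le_of_le_of_eq (le_of_le_of_eq (le_of_le_of_eq (le_of_le_of_eq step1 step2) step3) step4) step5
  have hBne : L_B ≠ ⊤ := by rw [← hBeq]; exact ENNReal.ofReal_ne_top
  calc ∫ x, |J x| ^ q * f x ∂μ = L_A.toReal := hAeq
    _ ≤ L_B.toReal := ENNReal.toReal_mono hBne main
    _ = ∫ x, |h x / f x| ^ q * f x ∂μ := by rw [← hBeq, ENNReal.toReal_ofReal hB0]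
end

section
/- The operator T† defined with H^{-1} in place of H is the adjoint of T with respect to the weighted pairing: ⟨T h, k⟩ = ⟨h, T† k⟩ for h ∈ L^q, k ∈ L^p. -/
open MeasureTheory

/-- `T†` (defined with `H⁻¹` in place of `H`) is the adjoint of `T` with respect to
the weighted pairing `⟨a,b⟩ = ∫_Q ab/f`. -/
theorem hmc_adjoint
    {Q P : Type*} [MeasurableSpace Q] [MeasurableSpace P]
    (μ : Measure Q) (ν : Measure P) [SigmaFinite μ] [SigmaFinite ν]
    (f : Q → ℝ) (hf_pos : ∀ x, 0 < f x) (hf_int : Integrable f μ)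
    (g : P → ℝ) (hg_pos : ∀ y, 0 < g y) (hg_prob : ∫ y, g y ∂ν = 1)
    (H Hinv : Q × P → Q × P)
    (hHinv : Function.LeftInverse Hinv H ∧ Function.RightInverse Hinv H)
    (hH_meas : MeasurePreserving H (μ.prod ν) (μ.prod ν))
    (hHinv_meas : MeasurePreserving Hinv (μ.prod ν) (μ.prod ν))
    (hH_inv : ∀ z : Q × P, f (H z).1 * g (H z).2 = f z.1 * g z.2)
    (q p : ℝ) (hq : 1 < q) (hp : 1 < p) (hqp : 1 / q + 1 / p = 1)
    (h k : Q → ℝ) (h_meas : Measurable h) (k_meas : Measurable k)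
    (h_mem : Integrable (fun x => |h x / f x| ^ q * f x) μ)
    (k_mem : Integrable (fun x => |k x / f x| ^ p * f x) μ)
    (h_int' : Integrable (fun z : Q × P => h (H z).1 * g (H z).2) (μ.prod ν))
    (k_int' : Integrable (fun z : Q × P => k (Hinv z).1 * g (Hinv z).2) (μ.prod ν)) :
    ∫ x, (∫ y, h (H (x, y)).1 * g (H (x, y)).2 ∂ν) * k x / f x ∂μ
      = ∫ x, h x * (∫ y, k (Hinv (x, y)).1 * g (Hinv (x, y)).2 ∂ν) / f x ∂μ := by
  have hqp' : Real.HolderConjugate q p := Real.holderConjugate_iff.mpr ⟨hq, by simpa [one_div] using hqp⟩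
  have hfne : ∀ x, f x ≠ 0 := fun x => (hf_pos x).ne'
  -- the measurable equivalence induced by H
  let e : (Q × P) ≃ᵐ (Q × P) :=
    { toFun := H
      invFun := Hinv
      left_inv := hHinv.1
      right_inv := hHinv.2
      measurable_toFun := hH_meas.measurable
      measurable_invFun := hHinv_meas.measurable }
  set φ : Q × P → ℝ := fun z => h (H z).1 * g (H z).2 * (k z.1 / f z.1) with hφdef
  set ψ : Q × P → ℝ := fun z => h z.1 * (k (Hinv z).1 * g (Hinv z).2) / f z.1 with hψdef
  -- the key pointwise identity
  have key : ∀ z, φ z = ψ (H z) := by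
    intro z
    have hz := hH_inv z
    simp only [hφdef, hψdef, hHinv.1 z]
    field_simp [hfne z.1, hfne (H z).1]
    linear_combination h (H z).1 * k z.1 * hz
  -- integrability of g
  have hgQ : Integrable g ν := by
    by_contra hcon
    rw [integral_undef hcon] at hg_prob
    exact one_ne_zero hg_prob.symm
  -- integrable bound for φ
  have hI2 : Integrable (fun z : Q × P => |k z.1 / f z.1| ^ p * f z.1 * g z.2) (μ.prod ν) := by
    simpa [mul_assoc] using k_mem.mul_prod hgQ
  have hI1' : Integrable (fun z : Q × P => |h z.1 / f z.1| ^ q * f z.1 * g z.2) (μ.prod ν) := by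
    simpa [mul_assoc] using h_mem.mul_prod hgQ
  have hI1 : Integrable
      (fun z : Q × P => |h (H z).1 / f (H z).1| ^ q * f (H z).1 * g (H z).2) (μ.prod ν) := by
    rw [← hH_meas.map_eq] at hI1'
    exact (e.measurableEmbedding.integrable_map_iff.mp hI1' :)
  have hB : Integrable (fun z : Q × P =>
      |h (H z).1 / f (H z).1| ^ q * f (H z).1 * g (H z).2 / q
        + |k z.1 / f z.1| ^ p * f z.1 * g z.2 / p) (μ.prod ν) :=
    (hI1.div_const q).add (hI2.div_const p)
  -- a.e. strong measurability of φ
  have hfQ : AEMeasurable (fun z : Q × P => f z.1) (μ.prod ν) :=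
    hf_int.aemeasurable.comp_quasiMeasurePreserving
      MeasureTheory.Measure.quasiMeasurePreserving_fst
  have hφ_asm : AEStronglyMeasurable φ (μ.prod ν) :=
    h_int'.aestronglyMeasurable.mul
      (((k_meas.comp measurable_fst).aemeasurable.div hfQ).aestronglyMeasurable)
  -- the pointwise bound
  have hbound : ∀ z : Q × P, ‖φ z‖ ≤
      |h (H z).1 / f (H z).1| ^ q * f (H z).1 * g (H z).2 / q
        + |k z.1 / f z.1| ^ p * f z.1 * g z.2 / p := by
    intro z
    have hz := hH_inv z
    set a := |h (H z).1 / f (H z).1| with ha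
    set b := |k z.1 / f z.1| with hb
    have habs : ‖φ z‖ = a * b * (f (H z).1 * g (H z).2) := by
      rw [Real.norm_eq_abs]
      simp only [hφdef, ha, hb, abs_mul, abs_div, abs_of_pos (hf_pos z.1),
        abs_of_pos (hf_pos (H z).1), abs_of_pos (hg_pos (H z).2)]
      field_simp [hfne z.1, hfne (H z).1]
    rw [habs]
    have hy : a * b ≤ a ^ q / q + b ^ p / p :=
      Real.young_inequality_of_nonneg (abs_nonneg _) (abs_nonneg _) hqp'
    have hc : (0:ℝ) ≤ f (H z).1 * g (H z).2 :=
      le_of_lt (mul_pos (hf_pos _) (hg_pos _))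
    calc a * b * (f (H z).1 * g (H z).2)
        ≤ (a ^ q / q + b ^ p / p) * (f (H z).1 * g (H z).2) := by
          exact mul_le_mul_of_nonneg_right hy hc
      _ = a ^ q * f (H z).1 * g (H z).2 / q
          + b ^ p * (f (H z).1 * g (H z).2) / p := by ring
      _ = a ^ q * f (H z).1 * g (H z).2 / q + b ^ p * f z.1 * g z.2 / p := by
          rw [hz]; ring
  have hφ : Integrable φ (μ.prod ν) :=
    hB.mono' hφ_asm (Filter.Eventually.of_forall hbound)
  -- ψ = φ ∘ Hinv
  have hψφ : ψ = φ ∘ Hinv := by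
    funext z
    have := key (Hinv z)
    rw [hHinv.2 z] at this
    exact this.symm
  have hψ : Integrable ψ (μ.prod ν) := by
    rw [hψφ]
    rw [← hHinv_meas.map_eq] at hφ
    exact (e.symm.measurableEmbedding.integrable_map_iff.mp hφ :)
  -- now compute
  calc ∫ x, (∫ y, h (H (x, y)).1 * g (H (x, y)).2 ∂ν) * k x / f x ∂μ
      = ∫ x, ∫ y, φ (x, y) ∂ν ∂μ := by
        congr 1
        funext x
        rw [mul_div_assoc, ← integral_mul_const]
    _ = ∫ z, φ z ∂(μ.prod ν) := integral_integral hφ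
    _ = ∫ z, ψ (H z) ∂(μ.prod ν) :=
        integral_congr_ae (Filter.Eventually.of_forall key)
    _ = ∫ z, ψ z ∂(μ.prod ν) := hH_meas.integral_comp e.measurableEmbedding ψ
    _ = ∫ x, ∫ y, ψ (x, y) ∂ν ∂μ := (integral_integral (f := fun x y => ψ (x, y)) hψ).symm
    _ = ∫ x, h x * (∫ y, k (Hinv (x, y)).1 * g (Hinv (x, y)).2 ∂ν) / f x ∂μ := by
        congr 1
        funext x
        have : ∀ y, ψ (x, y) = (k (Hinv (x, y)).1 * g (Hinv (x, y)).2) * (h x / f x) := by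
          intro y; simp only [hψdef]; ring
        simp_rw [this]
        rw [integral_mul_const]
        ring
end

section
/- If σ : P → P is a measure-preserving involution, g∘σ = g, and (extending σ to Q×P by σ(q,p) = (q,σ(p))) one has σ∘H^{-1}∘σ = H, then the HMC operator is self-adjoint: T† = T. -/
open MeasureTheory

/-- If `σ` is a measure-preserving involution of `P` with `g ∘ σ = g` and
(extending `σ` to `Q × P` by `σ(q,p) = (q, σ p)`) `σ ∘ H⁻¹ ∘ σ = H`,
then the HMC operator is self-adjoint: `T† = T`. -/
theorem hmc_self_adjoint_of_involution
    {Q P : Type*} [MeasurableSpace Q] [MeasurableSpace P]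
    (μ : Measure Q) (ν : Measure P) [SigmaFinite μ] [SigmaFinite ν]
    (g : P → ℝ) (hg_pos : ∀ y, 0 < g y) (hg_prob : ∫ y, g y ∂ν = 1)
    (H Hinv : Q × P → Q × P)
    (hHinv : Function.LeftInverse Hinv H ∧ Function.RightInverse Hinv H)
    (hH_meas : MeasurePreserving H (μ.prod ν) (μ.prod ν))
    (hHinv_meas : MeasurePreserving Hinv (μ.prod ν) (μ.prod ν))
    (σ : P → P) (hσ_meas : MeasurePreserving σ ν ν)
    (hσ_inv : ∀ y, σ (σ y) = y)
    (hgσ : ∀ y, g (σ y) = g y)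
    (hσH : ∀ z : Q × P, ((Hinv (z.1, σ z.2)).1, σ (Hinv (z.1, σ z.2)).2) = H z) :
    ∀ (h : Q → ℝ) (x : Q),
      (∫ y, h (Hinv (x, y)).1 * g (Hinv (x, y)).2 ∂ν)
        = ∫ y, h (H (x, y)).1 * g (H (x, y)).2 ∂ν := by
  intro h x
  have hσm : Measurable σ := hσ_meas.measurable
  let e : MeasurableEquiv P P :=
    { toFun := σ, invFun := σ,
      left_inv := hσ_inv, right_inv := hσ_inv,
      measurable_toFun := hσm, measurable_invFun := hσm }
  have key : ∀ y, h (Hinv (x, σ y)).1 * g (Hinv (x, σ y)).2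
      = h (H (x, y)).1 * g (H (x, y)).2 := by
    intro y
    have := hσH (x, y)
    have h1 := congrArg Prod.fst this
    have h2 := congrArg Prod.snd this
    simp only at h1 h2
    rw [h1, ← hgσ (Hinv (x, σ y)).2, h2]
  calc (∫ y, h (Hinv (x, y)).1 * g (Hinv (x, y)).2 ∂ν)
      = ∫ y, h (Hinv (x, e y)).1 * g (Hinv (x, e y)).2 ∂ν :=
        (hσ_meas.integral_comp e.measurableEmbedding
          (fun y => h (Hinv (x, y)).1 * g (Hinv (x, y)).2)).symm
    _ = ∫ y, h (H (x, y)).1 * g (H (x, y)).2 ∂ν := by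
        simp only [e]; exact integral_congr_ae (Filter.Eventually.of_forall key)
end

section
/- If T is a positive self-adjoint mass-preserving contraction on weighted L^q (q ≥ 2) with strict contraction off the fixed ray ℝ·f, then any weak limit h∞ of a subsequence T^{m_n}(h₀) with h₀ ≥ 0 satisfies ‖h∞‖_q^q = V, where V = lim_n ‖T^n h₀‖_q^q. -/
open MeasureTheory Filter

/-- The weighted pairing `⟨a,b⟩ = ∫_Q a·b/f`. -/
noncomputable def wpair {Q : Type*} [MeasurableSpace Q] (μ : Measure Q) (f a b : Q → ℝ) : ℝ :=
  ∫ x, a x * b x / f x ∂μ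

/-- The `q`-th power of the weighted `L^q` norm, `‖h‖_q^q = ∫_Q |h/f|^q f`. -/
noncomputable def wnormPow {Q : Type*} [MeasurableSpace Q] (μ : Measure Q) (f : Q → ℝ)
    (q : ℝ) (h : Q → ℝ) : ℝ :=
  ∫ x, |h x / f x| ^ q * f x ∂μ

/-- Membership in the weighted `L^q` space. -/
def memWL {Q : Type*} [MeasurableSpace Q] (μ : Measure Q) (f : Q → ℝ) (q : ℝ)
    (h : Q → ℝ) : Prop :=
  Measurable h ∧ Integrable (fun x => |h x / f x| ^ q * f x) μ

/-- The conjugacy map `h* = h (|h|/f)^(q-2)`. -/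
noncomputable def wconj {Q : Type*} (f : Q → ℝ) (q : ℝ) (h : Q → ℝ) : Q → ℝ :=
  fun x => h x * (|h x| / f x) ^ (q - 2)

lemma aux_rpow_succ {t c : ℝ} (ht : 0 ≤ t) (hc : 0 < c) : t * t ^ (c - 1) = t ^ c := by
  rcases ht.eq_or_lt with h | h
  · simp [← h, Real.zero_rpow hc.ne']
  · nth_rewrite 1 [← Real.rpow_one t]
    rw [← Real.rpow_add h, show (1:ℝ) + (c - 1) = c by ring]

lemma aux_pt_mul_conj {q h F : ℝ} (hq : 2 ≤ q) (hF : 0 < F) :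
    h * (h * (|h| / F) ^ (q - 2)) / F = |h / F| ^ q * F := by
  have hs : 0 ≤ |h| / F := div_nonneg (abs_nonneg _) hF.le
  have e1 : (|h| / F) * (|h| / F) ^ (q - 2) = (|h| / F) ^ (q - 1) := by
    have := aux_rpow_succ hs (show (0:ℝ) < q - 1 by linarith)
    rwa [show q - 1 - 1 = q - 2 by ring] at this
  have e2 : (|h| / F) * (|h| / F) ^ (q - 1) = (|h| / F) ^ q := by
    exact aux_rpow_succ hs (show (0:ℝ) < q by linarith)
  have habs : |h / F| = |h| / F := by rw [abs_div, abs_of_pos hF]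
  rw [habs, ← e2, ← e1]
  field_simp
  linear_combination (-((|h| / F) ^ (q - 2))) * (abs_mul_abs_self h)

lemma aux_pt_conj_norm {q p h F : ℝ} (hq : 2 ≤ q) (hqp1 : (q - 1) * p = q)
    (hF : 0 < F) : |h * (|h| / F) ^ (q - 2) / F| ^ p * F = |h / F| ^ q * F := by
  have hs : 0 ≤ |h| / F := div_nonneg (abs_nonneg _) hF.le
  have habs : |h / F| = |h| / F := by rw [abs_div, abs_of_pos hF]
  have e0 : |h * (|h| / F) ^ (q - 2) / F| = (|h| / F) * (|h| / F) ^ (q - 2) := by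
    rw [abs_div, abs_of_pos hF, abs_mul, abs_of_nonneg (Real.rpow_nonneg hs _)]
    ring
  have e1 : (|h| / F) * (|h| / F) ^ (q - 2) = (|h| / F) ^ (q - 1) := by
    have := aux_rpow_succ hs (show (0:ℝ) < q - 1 by linarith)
    rwa [show q - 1 - 1 = q - 2 by ring] at this
  rw [e0, e1, habs, ← Real.rpow_mul hs, hqp1]

lemma aux_int_of_mem {Q : Type*} [MeasurableSpace Q] {μ : Measure Q} {f : Q → ℝ}
    (hf_pos : ∀ x, 0 < f x) (hf_int : Integrable f μ) {q : ℝ} (hq : 1 ≤ q)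
    {h : Q → ℝ} (hm : memWL μ f q h) : Integrable h μ := by
  have bound : ∀ x, |h x| ≤ f x + |h x / f x| ^ q * f x := by
    intro x
    have hfx := hf_pos x
    have habs : |h x| = |h x / f x| * f x := by
      rw [abs_div, abs_of_pos hfx, div_mul_cancel₀ _ hfx.ne']
    set t := |h x / f x| with ht
    have ht0 : 0 ≤ t := abs_nonneg _
    rcases le_total t 1 with h1 | h1
    · have : t * f x ≤ 1 * f x := mul_le_mul_of_nonneg_right h1 hfx.le
      have h2 : 0 ≤ t ^ q * f x := mul_nonneg (Real.rpow_nonneg ht0 _) hfx.le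
      rw [habs]; linarith
    · have h3 : t ≤ t ^ q := by
        nth_rewrite 1 [← Real.rpow_one t]
        exact Real.rpow_le_rpow_of_exponent_le h1 hq
      have : t * f x ≤ t ^ q * f x := mul_le_mul_of_nonneg_right h3 hfx.le
      rw [habs]; linarith
  exact (hf_int.add hm.2).mono' hm.1.aestronglyMeasurable
    (Filter.Eventually.of_forall (fun x => by simpa [Real.norm_eq_abs] using bound x))

lemma aux_holder {Q : Type*} [MeasurableSpace Q] {μ : Measure Q} {f : Q → ℝ}
    (hf_pos : ∀ x, 0 < f x) (hf_int : Integrable f μ)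
    {q p : ℝ} (hq : 2 ≤ q) (hp : 1 < p) (hqp : 1 / q + 1 / p = 1)
    {a b : Q → ℝ} (ha : memWL μ f q a) (hb : memWL μ f p b) :
    Integrable (fun x => a x * b x / f x) μ ∧
    ∫ x, a x * b x / f x ∂μ ≤ (wnormPow μ f q a) ^ (1/q) * (wnormPow μ f p b) ^ (1/p) := by
  have hq0 : (0:ℝ) < q := by linarith
  have hp0 : (0:ℝ) < p := by linarith
  have hconj : Real.HolderConjugate q p := Real.holderConjugate_iff.mpr ⟨by linarith, by
    rw [← one_div, ← one_div]; exact hqp⟩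
  have hmeas : AEStronglyMeasurable (fun x => a x * b x / f x) μ :=
    (((ha.1.mul hb.1).aemeasurable).div hf_int.aemeasurable).aestronglyMeasurable
  have habs : ∀ x, |a x * b x / f x| = |a x / f x| * |b x / f x| * f x := by
    intro x
    have hfx := hf_pos x
    rw [abs_div, abs_mul, abs_of_pos hfx, abs_div, abs_div, abs_of_pos hfx]
    field_simp
  have hint : Integrable (fun x => a x * b x / f x) μ := by
    refine Integrable.mono' ((ha.2.const_mul (1/q)).add (hb.2.const_mul (1/p))) hmeas
      (Filter.Eventually.of_forall (fun x => ?_))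
    have hfx := hf_pos x
    have hy := Real.young_inequality_of_nonneg (abs_nonneg (a x / f x))
      (abs_nonneg (b x / f x)) hconj
    have := mul_le_mul_of_nonneg_right hy hfx.le
    rw [Real.norm_eq_abs, habs x]
    calc |a x / f x| * |b x / f x| * f x
        ≤ (|a x / f x| ^ q / q + |b x / f x| ^ p / p) * f x := this
      _ = 1 / q * (|a x / f x| ^ q * f x) + 1 / p * (|b x / f x| ^ p * f x) := by ring
  refine ⟨hint, ?_⟩
  set Aq := wnormPow μ f q a with hAq
  set Bp := wnormPow μ f p b with hBp
  have int_nonneg_a : ∀ x, 0 ≤ |a x / f x| ^ q * f x :=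
    fun x => mul_nonneg (Real.rpow_nonneg (abs_nonneg _) _) (hf_pos x).le
  have int_nonneg_b : ∀ x, 0 ≤ |b x / f x| ^ p * f x :=
    fun x => mul_nonneg (Real.rpow_nonneg (abs_nonneg _) _) (hf_pos x).le
  have hAq0 : 0 ≤ Aq := integral_nonneg int_nonneg_a
  have hBp0 : 0 ≤ Bp := integral_nonneg int_nonneg_b
  have rhs_nonneg : 0 ≤ Aq ^ (1/q) * Bp ^ (1/p) :=
    mul_nonneg (Real.rpow_nonneg hAq0 _) (Real.rpow_nonneg hBp0 _)
  rcases hAq0.eq_or_lt with h0 | hApos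
  · have hz : (fun x => |a x / f x| ^ q * f x) =ᵐ[μ] 0 :=
      (integral_eq_zero_iff_of_nonneg int_nonneg_a ha.2).mp h0.symm
    have hae : (fun x => a x * b x / f x) =ᵐ[μ] 0 := by
      filter_upwards [hz] with x hx
      have hfx := hf_pos x
      have h1 : |a x / f x| ^ q = 0 := by
        rcases mul_eq_zero.mp hx with h | h
        · exact h
        · exact absurd h hfx.ne'
      have h2 : a x = 0 := by
        have := (Real.rpow_eq_zero (abs_nonneg _) hq0.ne').mp h1
        have := abs_eq_zero.mp this
        rcases div_eq_zero_iff.mp this with h | h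
        · exact h
        · exact absurd h hfx.ne'
      simp [h2]
    rw [integral_congr_ae hae]
    simpa using rhs_nonneg
  rcases hBp0.eq_or_lt with h0 | hBpos
  · have hz : (fun x => |b x / f x| ^ p * f x) =ᵐ[μ] 0 :=
      (integral_eq_zero_iff_of_nonneg int_nonneg_b hb.2).mp h0.symm
    have hae : (fun x => a x * b x / f x) =ᵐ[μ] 0 := by
      filter_upwards [hz] with x hx
      have hfx := hf_pos x
      have h1 : |b x / f x| ^ p = 0 := by
        rcases mul_eq_zero.mp hx with h | h
        · exact h
        · exact absurd h hfx.ne'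
      have h2 : b x = 0 := by
        have := (Real.rpow_eq_zero (abs_nonneg _) hp0.ne').mp h1
        have := abs_eq_zero.mp this
        rcases div_eq_zero_iff.mp this with h | h
        · exact h
        · exact absurd h hfx.ne'
      simp [h2]
    rw [integral_congr_ae hae]
    simpa using rhs_nonneg
  · set A := Aq ^ (1/q) with hA
    set B := Bp ^ (1/p) with hB
    have hApos' : 0 < A := Real.rpow_pos_of_pos hApos _
    have hBpos' : 0 < B := Real.rpow_pos_of_pos hBpos _
    have hAqq : A ^ q = Aq := by
      rw [hA, ← Real.rpow_mul hAq0, one_div_mul_cancel hq0.ne', Real.rpow_one]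
    have hBpp : B ^ p = Bp := by
      rw [hB, ← Real.rpow_mul hBp0, one_div_mul_cancel hp0.ne', Real.rpow_one]
    have key : ∀ x, a x * b x / f x ≤
        A * B * (1 / (Aq * q) * (|a x / f x| ^ q * f x) + 1 / (Bp * p) * (|b x / f x| ^ p * f x)) := by
      intro x
      have hfx := hf_pos x
      have hy := Real.young_inequality_of_nonneg
        (div_nonneg (abs_nonneg (a x / f x)) hApos'.le)
        (div_nonneg (abs_nonneg (b x / f x)) hBpos'.le) hconj
      rw [Real.div_rpow (abs_nonneg _) hApos'.le, Real.div_rpow (abs_nonneg _) hBpos'.le,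
        hAqq, hBpp] at hy
      have h3 : |a x / f x| * |b x / f x| =
          (A * B) * ((|a x / f x| / A) * (|b x / f x| / B)) := by
        field_simp
      calc a x * b x / f x ≤ |a x * b x / f x| := le_abs_self _
        _ = |a x / f x| * |b x / f x| * f x := habs x
        _ ≤ (A * B) * (|a x / f x| ^ q / Aq / q + |b x / f x| ^ p / Bp / p) * f x := by
            refine mul_le_mul_of_nonneg_right ?_ hfx.le
            rw [h3]
            exact mul_le_mul_of_nonneg_left hy (by positivity)
        _ = A * B * (1 / (Aq * q) * (|a x / f x| ^ q * f x) + 1 / (Bp * p) * (|b x / f x| ^ p * f x)) := by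
            ring
    have int_maj : Integrable (fun x =>
        A * B * (1 / (Aq * q) * (|a x / f x| ^ q * f x) + 1 / (Bp * p) * (|b x / f x| ^ p * f x))) μ :=
      (((ha.2.const_mul _).add (hb.2.const_mul _)).const_mul _)
    have hmono := integral_mono hint int_maj key
    refine hmono.trans (le_of_eq ?_)
    rw [integral_const_mul, integral_add (ha.2.const_mul _) (hb.2.const_mul _),
      integral_const_mul, integral_const_mul]
    have hpq_sum : p + q = p * q := by
      have h1 : (1 / q + 1 / p) * (q * p) = 1 * (q * p) := by rw [hqp]
      field_simp at h1
      linarith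
    have eA : ∫ (x:Q), |a x / f x| ^ q * f x ∂μ = Aq := rfl
    have eB : ∫ (x:Q), |b x / f x| ^ p * f x ∂μ = Bp := rfl
    rw [eA, eB]
    field_simp
    linear_combination hpq_sum

/-- Any weak subsequential limit `h∞` of the iterates `T^n h₀` of a positive self-adjoint
mass-preserving contraction (strict off the ray `ℝ·f`, and satisfying the conjugate
comparison) has `‖h∞‖_q^q = V = lim ‖T^n h₀‖_q^q`. -/
theorem hmc_weak_limit_norm
    {Q : Type*} [MeasurableSpace Q] (μ : Measure Q)
    (f : Q → ℝ) (hf_pos : ∀ x, 0 < f x) (hf_int : Integrable f μ)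
    (q p : ℝ) (hq : 2 ≤ q) (hp : 1 < p) (hqp : 1 / q + 1 / p = 1)
    (T : (Q → ℝ) → (Q → ℝ))
    (hT_lin : ∀ (a b : Q → ℝ) (c : ℝ), T (fun x => c * a x + b x) = fun x => c * T a x + T b x)
    (hT_pos : ∀ a : Q → ℝ, (∀ x, 0 ≤ a x) → ∀ x, 0 ≤ T a x)
    (hT_mapsLq : ∀ a, memWL μ f q a → memWL μ f q (T a))
    (hT_mapsLp : ∀ a, memWL μ f p a → memWL μ f p (T a))
    (hT_selfadj : ∀ a b, memWL μ f q a → memWL μ f p b → wpair μ f (T a) b = wpair μ f a (T b))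
    (hT_contr : ∀ a, memWL μ f q a → wnormPow μ f q (T a) ≤ wnormPow μ f q a)
    (hT_strict : ∀ a, memWL μ f q a → (∀ x, 0 ≤ a x) →
      wnormPow μ f q (T a) = wnormPow μ f q a → ∃ α : ℝ, a =ᵐ[μ] fun x => α * f x)
    (hT_mass : ∀ a, memWL μ f q a → Integrable a μ → ∫ x, T a x ∂μ = ∫ x, a x ∂μ)
    (hT_conj : ∀ a, memWL μ f q a → (∀ x, 0 ≤ a x) →
      ∀ (n : ℕ) (x : Q), wconj f q (T^[n] a) x ≤ T^[n] (wconj f q a) x)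
    (h₀ : Q → ℝ) (h₀_nonneg : ∀ x, 0 ≤ h₀ x) (h₀_mem : memWL μ f q h₀)
    (V : ℝ) (hV : Tendsto (fun n => wnormPow μ f q (T^[n] h₀)) atTop (nhds V))
    (m : ℕ → ℕ) (hm : StrictMono m)
    (hinf : Q → ℝ) (hinf_mem : memWL μ f q hinf)
    (h_weak : ∀ b, memWL μ f p b →
      Tendsto (fun n => wpair μ f (T^[m n] h₀) b) atTop (nhds (wpair μ f hinf b))) :
    wnormPow μ f q hinf = V := by
  classical
  -- exponent arithmetic
  have hq0 : (0:ℝ) < q := by linarith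
  have hp0 : (0:ℝ) < p := by linarith
  have hpq_sum : p + q = p * q := by
    have h1 : (1 / q + 1 / p) * (q * p) = 1 * (q * p) := by rw [hqp]
    field_simp at h1
    linarith
  have hpq_mul : (q - 1) * p = q := by nlinarith [hpq_sum]
  -- measurable version of f and the bad null set N
  have hf_sm := hf_int.1
  set g : Q → ℝ := hf_sm.mk f with hgdef
  have hg_meas : Measurable g := hf_sm.stronglyMeasurable_mk.measurable
  have hfg : f =ᵐ[μ] g := hf_sm.ae_eq_mk
  set N : Set Q := toMeasurable μ {x | f x ≠ g x} with hNdef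
  have hN_meas : MeasurableSet N := measurableSet_toMeasurable _ _
  have hN_null : μ N = 0 := by
    rw [hNdef, measure_toMeasurable]
    exact ae_iff.mp hfg
  have hNc_ae : ∀ᵐ x ∂μ, x ∉ N := measure_eq_zero_iff_ae_notMem.mp hN_null
  have hfgN : ∀ x, x ∉ N → f x = g x := by
    intro x hx
    by_contra h
    exact hx (subset_toMeasurable _ _ h)
  -- iterates of h₀
  have hA_mem : ∀ n : ℕ, memWL μ f q (T^[n] h₀) := by
    intro n
    induction n with
    | zero => simpa using h₀_mem
    | succ k ih => rw [Function.iterate_succ_apply']; exact hT_mapsLq _ ih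
  have hA_nonneg : ∀ (n : ℕ) (x : Q), 0 ≤ T^[n] h₀ x := by
    intro n
    induction n with
    | zero => simpa using h₀_nonneg
    | succ k ih => rw [Function.iterate_succ_apply']; exact hT_pos _ ih
  -- general iterate lemmas
  have hMemQ_iter : ∀ (k : ℕ) (u : Q → ℝ), memWL μ f q u → memWL μ f q (T^[k] u) := by
    intro k
    induction k with
    | zero => intro u hu; simpa using hu
    | succ k ih =>
      intro u hu
      rw [Function.iterate_succ_apply']
      exact hT_mapsLq _ (ih u hu)
  have hMemP_iter : ∀ (k : ℕ) (u : Q → ℝ), memWL μ f p u → memWL μ f p (T^[k] u) := by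
    intro k
    induction k with
    | zero => intro u hu; simpa using hu
    | succ k ih =>
      intro u hu
      rw [Function.iterate_succ_apply']
      exact hT_mapsLp _ (ih u hu)
  have hPos_iter : ∀ (k : ℕ) (u : Q → ℝ), (∀ x, 0 ≤ u x) → ∀ x, 0 ≤ T^[k] u x := by
    intro k
    induction k with
    | zero => intro u hu; simpa using hu
    | succ k ih =>
      intro u hu
      rw [Function.iterate_succ_apply']
      exact hT_pos _ (ih u hu)
  have hInt_of_mem : ∀ u : Q → ℝ, memWL μ f q u → Integrable u μ :=
    fun u hu => aux_int_of_mem hf_pos hf_int (by linarith) hu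
  have hSelf_iter : ∀ (k : ℕ) (u b : Q → ℝ), memWL μ f q u → memWL μ f p b →
      wpair μ f (T^[k] u) b = wpair μ f u (T^[k] b) := by
    intro k
    induction k with
    | zero => intro u b _ _; simp
    | succ k ih =>
      intro u b hu hb
      rw [Function.iterate_succ_apply, ih (T u) b (hT_mapsLq u hu) hb,
        hT_selfadj u (T^[k] b) hu (hMemP_iter k b hb),
        ← Function.iterate_succ_apply' T k b]
  have hMass_iter : ∀ (k : ℕ) (u : Q → ℝ), memWL μ f q u → Integrable u μ →
      ∫ x, T^[k] u x ∂μ = ∫ x, u x ∂μ := by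
    intro k
    induction k with
    | zero => intro u _ _; simp
    | succ k ih =>
      intro u hu hui
      rw [Function.iterate_succ_apply,
        ih (T u) (hT_mapsLq u hu) (hInt_of_mem _ (hT_mapsLq u hu))]
      exact hT_mass u hu hui
  have hT_add : ∀ u v : Q → ℝ, T (fun x => u x + v x) = fun x => T u x + T v x := by
    intro u v
    simpa using hT_lin u v 1
  have hIter_add : ∀ (k : ℕ) (u v : Q → ℝ),
      T^[k] (fun x => u x + v x) = fun x => T^[k] u x + T^[k] v x := by
    intro k
    induction k with
    | zero => intro u v; simp
    | succ k ih =>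
      intro u v
      rw [Function.iterate_succ_apply, hT_add u v, ih (T u) (T v),
        Function.iterate_succ_apply, Function.iterate_succ_apply]
  -- norm sequence
  set s : ℕ → ℝ := fun n => wnormPow μ f q (T^[n] h₀) with hsdef
  have hs_anti : Antitone s := by
    apply antitone_nat_of_succ_le
    intro n
    have := hT_contr (T^[n] h₀) (hA_mem n)
    rw [← Function.iterate_succ_apply' T n h₀] at this
    exact this
  have hs_geV : ∀ n, V ≤ s n := fun n =>
    le_of_tendsto hV (eventually_atTop.2 ⟨n, fun k hk => hs_anti hk⟩)
  have hs_nonneg : ∀ n, 0 ≤ s n := fun n =>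
    integral_nonneg (fun x => mul_nonneg (Real.rpow_nonneg (abs_nonneg _) _) (hf_pos x).le)
  have hV0 : 0 ≤ V := ge_of_tendsto hV (Filter.Eventually.of_forall hs_nonneg)
  -- the conjugate test function associated to w ∈ L^q
  have hrpow_meas : Measurable (fun x : ℝ => x ^ (q - 2)) :=
    (Real.continuous_rpow_const (by linarith)).measurable
  have key_conj : ∀ w : Q → ℝ, memWL μ f q w →
      ∃ B : Q → ℝ, memWL μ f p B ∧
        B = wconj f q (fun x => if x ∈ N then 0 else w x) ∧
        wnormPow μ f p B = wnormPow μ f q w ∧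
        wpair μ f w B = wnormPow μ f q w := by
    intro w hw
    set wh : Q → ℝ := fun x => if x ∈ N then 0 else w x with hwh
    set B : Q → ℝ := fun x => if x ∈ N then 0 else w x * (|w x| / g x) ^ (q - 2) with hBdef
    have hBeq : B = wconj f q wh := by
      funext x
      by_cases hx : x ∈ N
      · simp [hBdef, hwh, wconj, hx]
      · simp only [hBdef, hwh, wconj, if_neg hx]
        rw [hfgN x hx]
    have hB_meas : Measurable B :=
      Measurable.ite hN_meas measurable_const
        (hw.1.mul (hrpow_meas.comp (hw.1.abs.div hg_meas)))
    have hptB : ∀ x, |B x / f x| ^ p * f x =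
        (if x ∈ N then 0 else |w x / f x| ^ q * f x) := by
      intro x
      by_cases hx : x ∈ N
      · simp only [hBdef, if_pos hx, hx]
        rw [zero_div, abs_zero, Real.zero_rpow hp0.ne', zero_mul]
        simp
      · simp only [hBdef, if_neg hx]
        rw [hfgN x hx] at *
        rw [← hfgN x hx]
        exact aux_pt_conj_norm hq hpq_mul (hf_pos x)
    have hBint : Integrable (fun x => |B x / f x| ^ p * f x) μ := by
      have heq : (fun x => |B x / f x| ^ p * f x) =ᵐ[μ] (fun x => |w x / f x| ^ q * f x) := by
        filter_upwards [hNc_ae] with x hx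
        rw [hptB x, if_neg hx]
      exact hw.2.congr heq.symm
    have hB_mem : memWL μ f p B := ⟨hB_meas, hBint⟩
    have hB_norm : wnormPow μ f p B = wnormPow μ f q w := by
      unfold wnormPow
      apply integral_congr_ae
      filter_upwards [hNc_ae] with x hx
      rw [hptB x, if_neg hx]
    have hB_pair : wpair μ f w B = wnormPow μ f q w := by
      unfold wpair wnormPow
      apply integral_congr_ae
      filter_upwards [hNc_ae] with x hx
      simp only [hBdef, if_neg hx]
      rw [← hfgN x hx]
      exact aux_pt_mul_conj hq (hf_pos x)
    exact ⟨B, hB_mem, hBeq, hB_norm, hB_pair⟩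
  -- Step A : W ≤ V^(1/q) * W^(1/p)
  set W := wnormPow μ f q hinf with hWdef
  have hW0 : 0 ≤ W :=
    integral_nonneg (fun x => mul_nonneg (Real.rpow_nonneg (abs_nonneg _) _) (hf_pos x).le)
  obtain ⟨C, hC_mem, hC_eq, hC_norm, hC_pair⟩ := key_conj hinf hinf_mem
  have stepA : W ≤ V ^ (1/q) * W ^ (1/p) := by
    have hlim1 : Tendsto (fun n => wpair μ f (T^[m n] h₀) C) atTop (nhds W) := by
      have := h_weak C hC_mem
      rwa [hC_pair] at this
    have hlim2 : Tendsto (fun n => (s (m n)) ^ (1/q) * W ^ (1/p)) atTop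
        (nhds (V ^ (1/q) * W ^ (1/p))) := by
      have h1 : Tendsto (fun n => s (m n)) atTop (nhds V) := hV.comp hm.tendsto_atTop
      exact (h1.rpow_const (Or.inr (by positivity))).mul_const _
    refine le_of_tendsto_of_tendsto' hlim1 hlim2 (fun n => ?_)
    have h := (aux_holder hf_pos hf_int hq hp hqp (hA_mem (m n)) hC_mem).2
    rw [hC_norm] at h
    exact h
  -- Step B : V ≤ W^(1/q) * V^(1/p)
  obtain ⟨S, hS_inf, hS_par⟩ : ∃ S : Set ℕ, S.Infinite ∧
      ((∀ n ∈ S, Even (m n)) ∨ (∀ n ∈ S, ¬ Even (m n))) := by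
    by_cases hfin : {n : ℕ | Even (m n)}.Infinite
    · exact ⟨_, hfin, Or.inl (fun n hn => hn)⟩
    · refine ⟨{n : ℕ | Even (m n)}ᶜ, ?_, Or.inr (fun n hn => hn)⟩
      rw [Set.not_infinite] at hfin
      exact hfin.infinite_compl
  have hSinf' : (setOf (· ∈ S)).Infinite := by exact hS_inf
  set ψ : ℕ → ℕ := Nat.nth (· ∈ S) with hψdef
  have hψ_mono : StrictMono ψ := Nat.nth_strictMono hSinf'
  have hψ_mem : ∀ k, ψ k ∈ S := fun k => Nat.nth_mem_of_infinite hSinf' k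
  have stepB_j : ∀ j : ℕ, V ≤ W ^ (1/q) * (s (m (ψ j))) ^ (1/p) := by
    intro j
    set a : Q → ℝ := T^[m (ψ j)] h₀ with hadef
    have ha_mem : memWL μ f q a := hA_mem _
    have ha_nonneg : ∀ x, 0 ≤ a x := hA_nonneg _
    set at' : Q → ℝ := fun x => if x ∈ N then 0 else a x with hatdef
    set dl : Q → ℝ := fun x => if x ∈ N then a x else 0 with hdldef
    have h_split : a = fun x => at' x + dl x := by
      funext x
      by_cases hx : x ∈ N <;> simp [hatdef, hdldef, hx]
    have hat_nonneg : ∀ x, 0 ≤ at' x := by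
      intro x
      by_cases hx : x ∈ N <;> simp [hatdef, hx, ha_nonneg x]
    have hdl_nonneg : ∀ x, 0 ≤ dl x := by
      intro x
      by_cases hx : x ∈ N <;> simp [hdldef, hx, ha_nonneg x]
    have hat_ae : at' =ᵐ[μ] a := by
      filter_upwards [hNc_ae] with x hx
      simp [hatdef, hx]
    have hdl_ae : dl =ᵐ[μ] (fun _ => (0:ℝ)) := by
      filter_upwards [hNc_ae] with x hx
      simp [hdldef, hx]
    have hat_meas : Measurable at' := Measurable.ite hN_meas measurable_const ha_mem.1
    have hat_mem : memWL μ f q at' := by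
      refine ⟨hat_meas, ha_mem.2.congr ?_⟩
      filter_upwards [hat_ae] with x hx
      rw [hx]
    have hdl_meas : Measurable dl := Measurable.ite hN_meas ha_mem.1 measurable_const
    have hdl_mem : memWL μ f q dl := by
      refine ⟨hdl_meas, (integrable_zero _ _ _).congr ?_⟩
      filter_upwards [hdl_ae] with x hx
      rw [hx]
      simp [Real.zero_rpow hq0.ne']
    have hdl_int : Integrable dl μ := (integrable_zero _ _ _).congr hdl_ae.symm
    have hdl_izero : ∫ x, dl x ∂μ = 0 := by
      rw [integral_congr_ae hdl_ae, integral_zero]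
    have hTdl_ae : ∀ k : ℕ, (fun x => T^[k] dl x) =ᵐ[μ] (fun _ => (0:ℝ)) := by
      intro k
      have hmem := hMemQ_iter k dl hdl_mem
      have hint : Integrable (T^[k] dl) μ := hInt_of_mem _ hmem
      have hnn : ∀ x, 0 ≤ T^[k] dl x := hPos_iter k dl hdl_nonneg
      have hizero : ∫ x, T^[k] dl x ∂μ = 0 := by
        rw [hMass_iter k dl hdl_mem hdl_int, hdl_izero]
      exact (integral_eq_zero_iff_of_nonneg hnn hint).mp hizero
    obtain ⟨B, hB_mem, hB_eq, hB_norm, _⟩ := key_conj a ha_mem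
    have hB_eq' : B = wconj f q at' := hB_eq
    have hev : ∀ n, j ≤ n → V ≤ wpair μ f (T^[m (ψ n)] h₀) B := by
      intro n hjn
      have hmm : m (ψ j) ≤ m (ψ n) := hm.monotone (hψ_mono.monotone hjn)
      have heven : Even (m (ψ n) - m (ψ j)) := by
        rcases hS_par with he | ho
        · rw [Nat.even_sub hmm]
          simp [he _ (hψ_mem n), he _ (hψ_mem j)]
        · rw [Nat.even_sub hmm]
          simp [ho _ (hψ_mem n), ho _ (hψ_mem j)]
      obtain ⟨r, hr⟩ := heven
      have hmn : m (ψ n) = r + r + m (ψ j) := by omega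
      have e1 : T^[m (ψ n)] h₀ = T^[r + r] a := by
        rw [hmn, Function.iterate_add_apply]
      have e2 : T^[r + r] a = fun x => T^[r + r] at' x + T^[r + r] dl x := by
        rw [h_split, hIter_add]
      have e3 : wpair μ f (T^[m (ψ n)] h₀) B = wpair μ f (T^[r + r] at') B := by
        rw [e1]
        unfold wpair
        apply integral_congr_ae
        filter_upwards [hTdl_ae (r + r)] with x hx
        have hval : T^[r + r] a x = T^[r + r] at' x := by
          rw [e2]
          simp only []
          rw [hx]
          ring
        rw [hval]
      have e4 : wpair μ f (T^[r + r] at') B = wpair μ f (T^[r] at') (T^[r] B) := by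
        rw [show T^[r + r] at' = T^[r] (T^[r] at') from Function.iterate_add_apply T r r at']
        exact hSelf_iter r (T^[r] at') B (hMemQ_iter r at' hat_mem) hB_mem
      have hu_mem : memWL μ f q (T^[r] at') := hMemQ_iter r at' hat_mem
      have hu_nonneg : ∀ x, 0 ≤ T^[r] at' x := hPos_iter r at' hat_nonneg
      have hTB_mem : memWL μ f p (T^[r] B) := hMemP_iter r B hB_mem
      have hptwise : ∀ x, |T^[r] at' x / f x| ^ q * f x ≤ T^[r] at' x * T^[r] B x / f x := by
        intro x
        have hconj := hT_conj at' hat_mem hat_nonneg r x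
        rw [← hB_eq'] at hconj
        have hid : |T^[r] at' x / f x| ^ q * f x
            = T^[r] at' x * wconj f q (T^[r] at') x / f x := by
          rw [show wconj f q (T^[r] at') x
              = T^[r] at' x * (|T^[r] at' x| / f x) ^ (q - 2) from rfl]
          exact (aux_pt_mul_conj hq (hf_pos x)).symm
        rw [hid]
        have hmul := mul_le_mul_of_nonneg_left hconj (hu_nonneg x)
        exact div_le_div_of_nonneg_right hmul (hf_pos x).le
      have hlow : wnormPow μ f q (T^[r] at') ≤ wpair μ f (T^[r] at') (T^[r] B) := by
        unfold wpair wnormPow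
        exact integral_mono hu_mem.2
          (aux_holder hf_pos hf_int hq hp hqp hu_mem hTB_mem).1 hptwise
      have hnorm_ge : V ≤ wnormPow μ f q (T^[r] at') := by
        have heq : wnormPow μ f q (T^[r] at') = wnormPow μ f q (T^[r + m (ψ j)] h₀) := by
          unfold wnormPow
          apply integral_congr_ae
          have e5 : T^[r + m (ψ j)] h₀ = T^[r] a := by rw [Function.iterate_add_apply]
          rw [e5]
          filter_upwards [hTdl_ae r] with x hx
          have hval : T^[r] a x = T^[r] at' x := by
            rw [h_split, hIter_add]
            simp only []
            rw [hx]
            ring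
          rw [hval]
        rw [heq]
        exact hs_geV (r + m (ψ j))
      calc V ≤ wnormPow μ f q (T^[r] at') := hnorm_ge
        _ ≤ wpair μ f (T^[r] at') (T^[r] B) := hlow
        _ = wpair μ f (T^[m (ψ n)] h₀) B := by rw [← e4, ← e3]
    have hlim : Tendsto (fun n => wpair μ f (T^[m (ψ n)] h₀) B) atTop
        (nhds (wpair μ f hinf B)) :=
      (h_weak B hB_mem).comp hψ_mono.tendsto_atTop
    have hVle : V ≤ wpair μ f hinf B :=
      ge_of_tendsto hlim (eventually_atTop.2 ⟨j, hev⟩)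
    have hup : wpair μ f hinf B ≤ W ^ (1/q) * (s (m (ψ j))) ^ (1/p) := by
      have h := (aux_holder hf_pos hf_int hq hp hqp hinf_mem hB_mem).2
      rw [hB_norm] at h
      exact h
    linarith
  have stepB : V ≤ W ^ (1/q) * V ^ (1/p) := by
    have h1 : Tendsto (fun j => s (m (ψ j))) atTop (nhds V) :=
      hV.comp ((hm.comp hψ_mono).tendsto_atTop)
    have hlim : Tendsto (fun j => W ^ (1/q) * (s (m (ψ j))) ^ (1/p)) atTop
        (nhds (W ^ (1/q) * V ^ (1/p))) :=
      (h1.rpow_const (Or.inr (by positivity))).const_mul _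
    exact ge_of_tendsto hlim (Filter.Eventually.of_forall stepB_j)
  -- endgame
  rcases hV0.eq_or_lt with hV0' | hVpos
  · have hWle : W ≤ 0 := by
      have := stepA
      rw [← hV0', Real.zero_rpow (one_div_ne_zero hq0.ne'), zero_mul] at this
      exact this
    rw [← hV0']
    exact le_antisymm hWle hW0
  · have hWpos : 0 < W := by
      rcases hW0.eq_or_lt with h0 | h
      · exfalso
        have := stepB
        rw [← h0, Real.zero_rpow (one_div_ne_zero hq0.ne'), zero_mul] at this
        linarith
      · exact h
    have hWsplit : W = W ^ (1/q) * W ^ (1/p) := by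
      rw [← Real.rpow_add hWpos, hqp, Real.rpow_one]
    have hVsplit : V = V ^ (1/q) * V ^ (1/p) := by
      rw [← Real.rpow_add hVpos, hqp, Real.rpow_one]
    have h1 : W ^ (1/q) ≤ V ^ (1/q) :=
      (mul_le_mul_iff_of_pos_right (Real.rpow_pos_of_pos hWpos (1/p))).mp (by rw [← hWsplit]; exact stepA)
    have h2 : V ^ (1/q) ≤ W ^ (1/q) :=
      (mul_le_mul_iff_of_pos_right (Real.rpow_pos_of_pos hVpos (1/p))).mp (by rw [← hVsplit]; exact stepB)
    have h3 : W ^ (1/q) = V ^ (1/q) := le_antisymm h1 h2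
    have h4 : (W ^ (1/q)) ^ q = (V ^ (1/q)) ^ q := by rw [h3]
    rwa [← Real.rpow_mul hW0, ← Real.rpow_mul hV0, one_div_mul_cancel hq0.ne',
      Real.rpow_one, Real.rpow_one] at h4
end

section
/- For q ≥ 2 and h₀ ≥ 0 in weighted L^q, the iterates T^n(h₀) converge weakly to α f with α = (∫_Q h₀)/(∫_Q f). -/
open MeasureTheory Filter

lemma integrable_of_memWL {Q : Type*} [MeasurableSpace Q] {μ : Measure Q} {f : Q → ℝ}
    (hf_pos : ∀ x, 0 < f x) (hf_int : Integrable f μ) {q : ℝ} (hq : 1 ≤ q)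
    {h : Q → ℝ} (hh : memWL μ f q h) : Integrable h μ := by
  refine Integrable.mono' (hf_int.add hh.2) hh.1.aestronglyMeasurable
    (Filter.Eventually.of_forall fun x => ?_)
  have hfx := hf_pos x
  have h1 : ‖h x‖ = |h x / f x| * f x := by
    rw [Real.norm_eq_abs, abs_div, abs_of_pos hfx, div_mul_cancel₀ _ hfx.ne']
  have hpow : (0:ℝ) ≤ |h x / f x| ^ q * f x :=
    mul_nonneg (Real.rpow_nonneg (abs_nonneg _) q) hfx.le
  rw [h1]
  simp only [Pi.add_apply]
  rcases le_total (|h x / f x|) 1 with hle | hle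
  · have : |h x / f x| * f x ≤ f x := by nlinarith
    linarith
  · have h2 : |h x / f x| ≤ |h x / f x| ^ q := by
      calc |h x / f x| = |h x / f x| ^ (1:ℝ) := (Real.rpow_one _).symm
        _ ≤ |h x / f x| ^ q := Real.rpow_le_rpow_of_exponent_le hle hq
    have : |h x / f x| * f x ≤ |h x / f x| ^ q * f x :=
      mul_le_mul_of_nonneg_right h2 hfx.le
    linarith

/-- For `q ≥ 2` and nonnegative `h₀` in weighted `L^q`, the iterates `T^n h₀` of the
self-adjoint HMC operator converge weakly to `α f` with `α = (∫ h₀)/(∫ f)`. -/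
theorem hmc_weak_convergence
    {Q : Type*} [MeasurableSpace Q] (μ : Measure Q)
    (f : Q → ℝ) (hf_pos : ∀ x, 0 < f x) (hf_int : Integrable f μ)
    (q p : ℝ) (hq : 2 ≤ q) (hp : 1 < p) (hqp : 1 / q + 1 / p = 1)
    (T : (Q → ℝ) → (Q → ℝ))
    (hT_lin : ∀ (a b : Q → ℝ) (c : ℝ), T (fun x => c * a x + b x) = fun x => c * T a x + T b x)
    (hT_mapsLq : ∀ a, memWL μ f q a → memWL μ f q (T a))
    (hT_mapsLp : ∀ a, memWL μ f p a → memWL μ f p (T a))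
    (hT_selfadj : ∀ a b, memWL μ f q a → memWL μ f p b → wpair μ f (T a) b = wpair μ f a (T b))
    (hT_contr : ∀ a, memWL μ f q a → wnormPow μ f q (T a) ≤ wnormPow μ f q a)
    (hT_strict : ∀ a, memWL μ f q a →
      wnormPow μ f q (T a) = wnormPow μ f q a → ∃ α : ℝ, a =ᵐ[μ] fun x => α * f x)
    (hT_mass : ∀ a, memWL μ f q a → Integrable a μ → ∫ x, T a x ∂μ = ∫ x, a x ∂μ)
    -- weak sequential compactness of the bounded orbit (reflexivity of `L^q`)
    (h_compact : ∀ h : Q → ℝ, memWL μ f q h → ∀ m : ℕ → ℕ, StrictMono m →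
      ∃ (m' : ℕ → ℕ) (k : Q → ℝ), StrictMono m' ∧ memWL μ f q k ∧
        ∀ b, memWL μ f p b →
          Tendsto (fun n => wpair μ f (T^[m (m' n)] h) b) atTop (nhds (wpair μ f k b)))
    -- every weak subsequential limit of the orbit has norm `V = lim ‖T^n h₀‖_q^q`
    (h_limnorm : ∀ (h₀ : Q → ℝ), memWL μ f q h₀ → (∀ x, 0 ≤ h₀ x) →
      ∀ (V : ℝ), Tendsto (fun n => wnormPow μ f q (T^[n] h₀)) atTop (nhds V) →
      ∀ (m : ℕ → ℕ), StrictMono m → ∀ k, memWL μ f q k →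
        (∀ b, memWL μ f p b →
          Tendsto (fun n => wpair μ f (T^[m n] h₀) b) atTop (nhds (wpair μ f k b))) →
        wnormPow μ f q k = V)
    (h₀ : Q → ℝ) (h₀_nonneg : ∀ x, 0 ≤ h₀ x) (h₀_mem : memWL μ f q h₀)
    (h₀_int : Integrable h₀ μ) :
    ∀ b, memWL μ f p b →
      Tendsto (fun n => wpair μ f (T^[n] h₀) b) atTop
        (nhds (wpair μ f (fun x => ((∫ x, h₀ x ∂μ) / (∫ x, f x ∂μ)) * f x) b)) := by
  intro b hb
  rcases eq_or_ne μ 0 with hμ | hμ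
  · subst hμ
    simp only [wpair, integral_zero_measure]
    exact tendsto_const_nhds
  -- ∫ f > 0
  have hI : 0 < ∫ x, f x ∂μ := by
    rw [integral_pos_iff_support_of_nonneg (fun x => (hf_pos x).le) hf_int]
    have : Function.support f = Set.univ := Set.eq_univ_of_forall fun x => (hf_pos x).ne'
    rw [this]
    exact Measure.measure_univ_pos.mpr hμ
  set α : ℝ := (∫ x, h₀ x ∂μ) / (∫ x, f x ∂μ) with hα_def
  -- measurable version of f, used as a test function
  set g : Q → ℝ := hf_int.1.mk f with hg_def
  have hg_ae : f =ᵐ[μ] g := hf_int.1.ae_eq_mk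
  have hg_mem : memWL μ f p g := by
    refine ⟨hf_int.1.stronglyMeasurable_mk.measurable, ?_⟩
    refine hf_int.congr ?_
    filter_upwards [hg_ae] with x hx
    rw [← hx, div_self (hf_pos x).ne', abs_one, Real.one_rpow, one_mul]
  have hwpair_g : ∀ a : Q → ℝ, wpair μ f a g = ∫ x, a x ∂μ := by
    intro a
    refine integral_congr_ae ?_
    filter_upwards [hg_ae] with x hx
    rw [← hx, mul_div_assoc, div_self (hf_pos x).ne', mul_one]
  -- the orbit
  have horb : ∀ n, memWL μ f q (T^[n] h₀) := by
    intro n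
    induction n with
    | zero => simpa using h₀_mem
    | succ n ih => rw [Function.iterate_succ_apply']; exact hT_mapsLq _ ih
  have hq1 : (1:ℝ) ≤ q := by linarith
  have horb_int : ∀ n, Integrable (T^[n] h₀) μ :=
    fun n => integrable_of_memWL hf_pos hf_int hq1 (horb n)
  have hmass : ∀ n, ∫ x, T^[n] h₀ x ∂μ = ∫ x, h₀ x ∂μ := by
    intro n
    induction n with
    | zero => simp
    | succ n ih =>
      have : T^[n+1] h₀ = T (T^[n] h₀) := Function.iterate_succ_apply' T n h₀
      rw [this, hT_mass _ (horb n) (horb_int n), ih]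
  -- the norms converge
  set a : ℕ → ℝ := fun n => wnormPow μ f q (T^[n] h₀) with ha_def
  have hanti : Antitone a := by
    refine antitone_nat_of_succ_le fun n => ?_
    show wnormPow μ f q (T^[n+1] h₀) ≤ wnormPow μ f q (T^[n] h₀)
    rw [Function.iterate_succ_apply']
    exact hT_contr _ (horb n)
  have hbdd : BddBelow (Set.range a) := by
    refine ⟨0, ?_⟩
    rintro _ ⟨n, rfl⟩
    exact integral_nonneg fun x =>
      mul_nonneg (Real.rpow_nonneg (abs_nonneg _) q) (hf_pos x).le
  set V : ℝ := ⨅ n, a n with hV_def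
  have hV : Tendsto a atTop (nhds V) := tendsto_atTop_ciInf hanti hbdd
  -- main argument via subsequences
  refine tendsto_of_subseq_tendsto fun ns hns => ?_
  obtain ⟨φ, hφ, hφmono⟩ := strictMono_subseq_of_tendsto_atTop hns
  obtain ⟨m', k, hm', hk_mem, hk_conv⟩ := h_compact h₀ h₀_mem (ns ∘ φ) hφmono
  have hmm' : StrictMono ((ns ∘ φ) ∘ m') := hφmono.comp hm'
  have hk_conv' : ∀ b', memWL μ f p b' →
      Tendsto (fun n => wpair μ f (T^[((ns ∘ φ) ∘ m') n] h₀) b') atTop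
        (nhds (wpair μ f k b')) := fun b' hb' => hk_conv b' hb'
  have hnormk : wnormPow μ f q k = V :=
    h_limnorm h₀ h₀_mem h₀_nonneg V hV ((ns ∘ φ) ∘ m') hmm' k hk_mem hk_conv'
  -- shifted subsequence converges weakly to T k
  set m₂ : ℕ → ℕ := fun n => (ns ∘ φ) (m' n) + 1 with hm₂_def
  have hm₂ : StrictMono m₂ := fun i j hij => Nat.add_lt_add_right (hmm' hij) 1
  have hk2_conv : ∀ b', memWL μ f p b' →
      Tendsto (fun n => wpair μ f (T^[m₂ n] h₀) b') atTop (nhds (wpair μ f (T k) b')) := by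
    intro b' hb'
    have e1 : ∀ n, wpair μ f (T^[m₂ n] h₀) b' = wpair μ f (T^[(ns ∘ φ) (m' n)] h₀) (T b') := by
      intro n
      have : T^[m₂ n] h₀ = T (T^[(ns ∘ φ) (m' n)] h₀) := Function.iterate_succ_apply' T _ h₀
      rw [this]
      exact hT_selfadj _ b' (horb _) hb'
    have e2 : wpair μ f (T k) b' = wpair μ f k (T b') := hT_selfadj k b' hk_mem hb'
    rw [e2]
    simp only [e1]
    exact hk_conv (T b') (hT_mapsLp b' hb')
  have hnormTk : wnormPow μ f q (T k) = V :=
    h_limnorm h₀ h₀_mem h₀_nonneg V hV m₂ hm₂ (T k) (hT_mapsLq k hk_mem) hk2_conv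
  obtain ⟨α', hα'⟩ := hT_strict k hk_mem (hnormTk.trans hnormk.symm)
  -- identify α' = α via mass
  have hint_k : ∫ x, k x ∂μ = ∫ x, h₀ x ∂μ := by
    have h1 := hk_conv g hg_mem
    have h2 : (fun n => wpair μ f (T^[(ns ∘ φ) (m' n)] h₀) g)
        = fun _ => ∫ x, h₀ x ∂μ := funext fun n => (hwpair_g _).trans (hmass _)
    rw [h2, hwpair_g k] at h1
    exact tendsto_nhds_unique h1 tendsto_const_nhds
  have hint_k2 : ∫ x, k x ∂μ = α' * ∫ x, f x ∂μ := by
    rw [integral_congr_ae hα', integral_const_mul]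
  have hαα' : α' = α := by
    rw [hα_def, ← hint_k, hint_k2, mul_div_assoc, div_self hI.ne', mul_one]
  have hα : k =ᵐ[μ] fun x => α * f x := by rw [← hαα']; exact hα'
  -- conclude along the subsequence φ ∘ m'
  refine ⟨φ ∘ m', ?_⟩
  have hfinal : wpair μ f k b = wpair μ f (fun x => α * f x) b :=
    integral_congr_ae (by filter_upwards [hα] with x hx; rw [hx])
  have := hk_conv b hb
  rw [hfinal] at this
  exact this
end

section
/- If h∞ is a weak subsequential limit of T^n h₀ and T is weak-to-weak continuous (being bounded linear), then T h∞ is also a weak subsequential limit of T^n h₀; if additionally all weak subsequential limits have the same norm V and ‖T a‖ = ‖a‖ implies a = α f, then h∞ = α f with α = (∫ h₀)/(∫ f). -/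
open MeasureTheory Filter

lemma aux_integrable_of_memWL {Q : Type*} [MeasurableSpace Q] (μ : Measure Q)
    (f a : Q → ℝ) (hf_pos : ∀ x, 0 < f x) (hf_int : Integrable f μ)
    (q : ℝ) (hq : 1 ≤ q) (ha : memWL μ f q a) : Integrable a μ := by
  refine Integrable.mono' (hf_int.add ha.2) ha.1.aestronglyMeasurable
    (Filter.Eventually.of_forall fun x => ?_)
  have hfx : (0:ℝ) < f x := hf_pos x
  have habs : |a x / f x| * f x = |a x| := by
    rw [abs_div, abs_of_pos hfx, div_mul_cancel₀ _ hfx.ne']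
  rw [Real.norm_eq_abs, ← habs, Pi.add_apply]
  rcases le_or_gt (|a x / f x|) 1 with h1 | h1
  · have : |a x / f x| * f x ≤ f x := by nlinarith [abs_nonneg (a x / f x)]
    have h2 : (0:ℝ) ≤ |a x / f x| ^ q * f x :=
      mul_nonneg (Real.rpow_nonneg (abs_nonneg _) q) hfx.le
    linarith
  · have h2 : |a x / f x| ≤ |a x / f x| ^ q := by
      calc |a x / f x| = |a x / f x| ^ (1:ℝ) := (Real.rpow_one _).symm
        _ ≤ |a x / f x| ^ q := Real.rpow_le_rpow_of_exponent_le h1.le hq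
    nlinarith [abs_nonneg (a x / f x)]

/-- If `h∞` is a weak subsequential limit of `T^n h₀` and `T` is weak-to-weak continuous,
then `T h∞` is also a weak subsequential limit of `T^n h₀`; if in addition every weak
subsequential limit has the same norm `V` and the equality case `‖T a‖ = ‖a‖` forces
`a = α f`, then `h∞ = α f` a.e. with `α = (∫ h₀)/(∫ f)`. -/
theorem hmc_weak_limit_is_fixed_ray
    {Q : Type*} [MeasurableSpace Q] (μ : Measure Q)
    (f : Q → ℝ) (hf_pos : ∀ x, 0 < f x) (hf_int : Integrable f μ)
    (q p : ℝ) (hq : 2 ≤ q) (hp : 1 < p) (hqp : 1 / q + 1 / p = 1)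
    (T : (Q → ℝ) → (Q → ℝ))
    (hT_mapsLq : ∀ a, memWL μ f q a → memWL μ f q (T a))
    -- weak-to-weak sequential continuity of the bounded linear operator `T`
    (hT_weak_cont : ∀ (u : ℕ → (Q → ℝ)) (k : Q → ℝ),
      (∀ n, memWL μ f q (u n)) → memWL μ f q k →
      (∀ b, memWL μ f p b →
        Tendsto (fun n => wpair μ f (u n) b) atTop (nhds (wpair μ f k b))) →
      ∀ b, memWL μ f p b →
        Tendsto (fun n => wpair μ f (T (u n)) b) atTop (nhds (wpair μ f (T k) b)))
    (hT_mass : ∀ a, memWL μ f q a → Integrable a μ → ∫ x, T a x ∂μ = ∫ x, a x ∂μ)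
    (h₀ : Q → ℝ) (h₀_mem : memWL μ f q h₀) (h₀_int : Integrable h₀ μ)
    (hinf : Q → ℝ) (hinf_mem : memWL μ f q hinf)
    (m : ℕ → ℕ) (hm : StrictMono m)
    (h_weak : ∀ b, memWL μ f p b →
      Tendsto (fun n => wpair μ f (T^[m n] h₀) b) atTop (nhds (wpair μ f hinf b))) :
    ((∃ (m' : ℕ → ℕ), StrictMono m' ∧
      ∀ b, memWL μ f p b →
        Tendsto (fun n => wpair μ f (T^[m' n] h₀) b) atTop (nhds (wpair μ f (T hinf) b))) ∧
     (∀ V : ℝ,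
      (∀ (m'' : ℕ → ℕ), StrictMono m'' → ∀ k, memWL μ f q k →
        (∀ b, memWL μ f p b →
          Tendsto (fun n => wpair μ f (T^[m'' n] h₀) b) atTop (nhds (wpair μ f k b))) →
        wnormPow μ f q k = V) →
      (∀ a, memWL μ f q a → wnormPow μ f q (T a) = wnormPow μ f q a →
        ∃ α : ℝ, a =ᵐ[μ] fun x => α * f x) →
      hinf =ᵐ[μ] fun x => ((∫ x, h₀ x ∂μ) / (∫ x, f x ∂μ)) * f x)) := by

  have hq1 : (1:ℝ) ≤ q := le_trans one_le_two hq
  -- all iterates stay in WL^q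
  have iter_mem : ∀ n, memWL μ f q (T^[n] h₀) := by
    intro n
    induction n with
    | zero => exact h₀_mem
    | succ n ih => rw [Function.iterate_succ_apply']; exact hT_mapsLq _ ih
  have iter_int : ∀ n, Integrable (T^[n] h₀) μ := fun n =>
    aux_integrable_of_memWL μ f _ hf_pos hf_int q hq1 (iter_mem n)
  have mass : ∀ n, ∫ x, T^[n] h₀ x ∂μ = ∫ x, h₀ x ∂μ := by
    intro n
    induction n with
    | zero => rfl
    | succ n ih =>
        rw [show T^[n+1] h₀ = T (T^[n] h₀) from Function.iterate_succ_apply' T n h₀]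
        rw [hT_mass _ (iter_mem n) (iter_int n)]
        exact ih
  -- part 1
  have key := hT_weak_cont (fun n => T^[m n] h₀) hinf (fun n => iter_mem (m n)) hinf_mem h_weak
  have hm' : StrictMono (fun n => m n + 1) := fun a b h => Nat.succ_lt_succ (hm h)
  have part1 : ∀ b, memWL μ f p b →
      Tendsto (fun n => wpair μ f (T^[(fun n => m n + 1) n] h₀) b) atTop
        (nhds (wpair μ f (T hinf) b)) := by
    intro b hb
    have := key b hb
    simpa [Function.iterate_succ_apply'] using this
  refine ⟨⟨fun n => m n + 1, hm', part1⟩, ?_⟩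
  intro V hV hEq
  have hVinf : wnormPow μ f q hinf = V := hV m hm hinf hinf_mem h_weak
  have hVTinf : wnormPow μ f q (T hinf) = V :=
    hV (fun n => m n + 1) hm' (T hinf) (hT_mapsLq hinf hinf_mem) part1
  obtain ⟨α, hα⟩ := hEq hinf hinf_mem (hVTinf.trans hVinf.symm)
  -- measurable a.e.-version of f as a test function
  obtain ⟨g, hg_sm, hg_ae⟩ := hf_int.1
  have hg_mem : memWL μ f p g := by
    refine ⟨hg_sm.measurable, Integrable.congr hf_int ?_⟩
    filter_upwards [hg_ae] with x hx
    rw [← hx, div_self (hf_pos x).ne', abs_one, Real.one_rpow, one_mul]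
  have pair_g : ∀ u : Q → ℝ, wpair μ f u g = ∫ x, u x ∂μ := by
    intro u
    apply integral_congr_ae
    filter_upwards [hg_ae] with x hx
    rw [← hx, mul_div_assoc, div_self (hf_pos x).ne', mul_one]
  have limit1 : Tendsto (fun n => wpair μ f (T^[m n] h₀) g) atTop
      (nhds (wpair μ f hinf g)) := h_weak g hg_mem
  have hconst : (fun n => wpair μ f (T^[m n] h₀) g) = fun _ => ∫ x, h₀ x ∂μ :=
    funext fun n => (pair_g _).trans (mass (m n))
  rw [hconst] at limit1
  have heq1 : (∫ x, h₀ x ∂μ) = wpair μ f hinf g :=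
    tendsto_nhds_unique tendsto_const_nhds limit1
  have heq2 : wpair μ f hinf g = α * ∫ x, f x ∂μ := by
    rw [pair_g]
    rw [integral_congr_ae hα, integral_const_mul]
  have hαf : α * ∫ x, f x ∂μ = ∫ x, h₀ x ∂μ := by rw [← heq2, ← heq1]
  by_cases hf0 : ∫ x, f x ∂μ = 0
  · have hf0' : f =ᵐ[μ] 0 :=
      (integral_eq_zero_iff_of_nonneg (fun x => (hf_pos x).le) hf_int).mp hf0
    have hfalse : ∀ᵐ x ∂μ, False := by
      filter_upwards [hf0'] with x hx
      exact (hf_pos x).ne' hx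
    have hμ : μ = 0 := by
      have := ae_iff.mp hfalse
      simpa using Measure.measure_univ_eq_zero.mp (by simpa using this)
    rw [hμ]
    simp [EventuallyEq]
  · have hαval : (∫ x, h₀ x ∂μ) / (∫ x, f x ∂μ) = α := by
      field_simp
      linarith [hαf]
    rw [hαval]
    exact hα
end
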